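/- For all i > j ≥ 0 and all coefficient sequences a, b, the ψ-derivative of the Fontané product satisfies D(a ∗_{i,j} b) = (D a) ∗_{i+1,j+1} b + a (∗_{i+1,j}∗_{1,0}) (D b), where ∗_{i+1,j}∗_{1,0} denotes the concatenated Fontané product with kernel F(n+i+1, k+j)·F(n+1, k). -/

import Mathlib

open Finset

/-- The ψ-factorial: ψₙ! = ψ₁ψ₂⋯ψₙ, with ψ₀! = 1. -/
noncomputable def psiFact (ψ : ℕ → ℂ) : ℕ → ℂ
  | 0 => 1
  | n + 1 => psiFact ψ n * ψ (n + 1)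

/-- The ψ-binomial coefficient binomψ(n,k) = ψₙ!/(ψₖ!·ψ_{n−k}!). -/
noncomputable def psiBinom (ψ : ℕ → ℂ) (n k : ℕ) : ℂ :=
  psiFact ψ n / (psiFact ψ k * psiFact ψ (n - k))

/-- The Fontané numbers F(n,k) = (ψₙ − ψₖ)/ψ_{n−k}. -/
noncomputable def Fker (ψ : ℕ → ℂ) (n k : ℕ) : ℂ :=
  (ψ n - ψ k) / ψ (n - k)

/-- The Fontané product ∗_{i,j} of coefficient sequences. -/
noncomputable def fontane (ψ : ℕ → ℂ) (i j : ℕ) (a b : ℕ → ℂ) (n : ℕ) : ℂ :=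
  ∑ k ∈ Finset.range (n + 1), Fker ψ (n + i) (k + j) * psiBinom ψ n k * a k * b (n - k)

/-- The concatenated Fontané product ∗_{i₁,j₁}∗_{i₂,j₂}. -/
noncomputable def fontane2 (ψ : ℕ → ℂ) (i₁ j₁ i₂ j₂ : ℕ) (a b : ℕ → ℂ) (n : ℕ) : ℂ :=
  ∑ k ∈ Finset.range (n + 1),
    Fker ψ (n + i₁) (k + j₁) * Fker ψ (n + i₂) (k + j₂) * psiBinom ψ n k * a k * b (n - k)

/-- The ψ-derivative on coefficient sequences: the shift (D a)ₙ = a_{n+1}. -/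
def Dpsi (a : ℕ → ℂ) (n : ℕ) : ℂ := a (n + 1)

lemma psiFact_ne_zero (ψ : ℕ → ℂ) (hψ : ∀ n : ℕ, 1 ≤ n → ψ n ≠ 0) (n : ℕ) :
    psiFact ψ n ≠ 0 := by
  induction n with
  | zero => simp [psiFact]
  | succ m ih => exact mul_ne_zero ih (hψ (m + 1) (Nat.le_add_left 1 m))

lemma psiBinom_self (ψ : ℕ → ℂ) (hψ : ∀ n : ℕ, 1 ≤ n → ψ n ≠ 0) (m : ℕ) :
    psiBinom ψ m m = 1 := by
  simp [psiBinom, psiFact, div_self (psiFact_ne_zero ψ hψ m)]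

lemma Fker_self (ψ : ℕ → ℂ) (m : ℕ) : Fker ψ m m = 0 := by
  simp [Fker]

lemma Fker_zero (ψ : ℕ → ℂ) (hψ0 : ψ 0 = 0) (hψ : ∀ n : ℕ, 1 ≤ n → ψ n ≠ 0) (m : ℕ) :
    Fker ψ (m + 1) 0 = 1 := by
  simp [Fker, hψ0, div_self (hψ (m + 1) (Nat.le_add_left 1 m))]

lemma psi_pascal (ψ : ℕ → ℂ) (hψ : ∀ n : ℕ, 1 ≤ n → ψ n ≠ 0) (n k : ℕ) (hk : k ≤ n) :
    psiBinom ψ (n + 1) (k + 1)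
      = psiBinom ψ n k + Fker ψ (n + 1) (k + 1) * psiBinom ψ n (k + 1) := by
  rcases eq_or_lt_of_le hk with rfl | h
  · simp [psiBinom_self ψ hψ, Fker_self]
  · obtain ⟨d, rfl⟩ : ∃ d, n = k + d + 1 := ⟨n - k - 1, by omega⟩
    have e1 : k + d + 1 + 1 - (k + 1) = d + 1 := by omega
    have e2 : k + d + 1 - k = d + 1 := by omega
    have e3 : k + d + 1 - (k + 1) = d := by omega
    have hfk := psiFact_ne_zero ψ hψ k
    have hfd := psiFact_ne_zero ψ hψ d
    have hk1 : ψ (k + 1) ≠ 0 := hψ _ (Nat.le_add_left 1 k)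
    have hd1 : ψ (d + 1) ≠ 0 := hψ _ (Nat.le_add_left 1 d)
    simp only [psiBinom, Fker, e1, e2, e3]
    rw [show psiFact ψ (k + d + 1 + 1) = psiFact ψ (k + d + 1) * ψ (k + d + 1 + 1) from rfl,
      show psiFact ψ (k + 1) = psiFact ψ k * ψ (k + 1) from rfl,
      show psiFact ψ (d + 1) = psiFact ψ d * ψ (d + 1) from rfl,
      div_mul_div_comm,
      div_add_div _ _ (by exact mul_ne_zero hfk (mul_ne_zero hfd hd1))
        (mul_ne_zero hd1 (mul_ne_zero (mul_ne_zero hfk hk1) hfd)),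
      div_eq_div_iff
        (mul_ne_zero (mul_ne_zero hfk hk1) (mul_ne_zero hfd hd1))
        (mul_ne_zero (mul_ne_zero hfk (mul_ne_zero hfd hd1))
          (mul_ne_zero hd1 (mul_ne_zero (mul_ne_zero hfk hk1) hfd)))]
    ring

/-- The ψ-derivative of the Fontané product:
D(a ∗_{i,j} b) = (D a) ∗_{i+1,j+1} b + a (∗_{i+1,j}∗_{1,0}) (D b). -/
theorem Dpsi_fontane (ψ : ℕ → ℂ) (hψ0 : ψ 0 = 0) (hψ1 : ψ 1 = 1) (hψ : ∀ n : ℕ, 1 ≤ n → ψ n ≠ 0)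
    (i j : ℕ) (hij : j < i) (a b : ℕ → ℂ) (n : ℕ) :
    Dpsi (fontane ψ i j a b) n
      = fontane ψ (i + 1) (j + 1) (Dpsi a) b n
        + fontane2 ψ (i + 1) j 1 0 a (Dpsi b) n := by
  simp only [Dpsi, fontane, fontane2]
  have hS : ∑ k ∈ Finset.range (n + 1 + 1),
        Fker ψ (n + (i + 1)) (k + j) * Fker ψ (n + 1) (k + 0) * psiBinom ψ n k * a k *
          b (n - k + 1)
      = ∑ k ∈ Finset.range (n + 1),
        Fker ψ (n + (i + 1)) (k + j) * Fker ψ (n + 1) (k + 0) * psiBinom ψ n k * a k *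
          b (n - k + 1) := by
    rw [Finset.sum_range_succ]
    simp [Fker_self]
  rw [← hS, Finset.sum_range_succ' (fun k => Fker ψ (n + (i + 1)) (k + j) * Fker ψ (n + 1) (k + 0)
      * psiBinom ψ n k * a k * b (n - k + 1)) (n + 1),
    Finset.sum_range_succ' (fun k => Fker ψ (n + 1 + i) (k + j) * psiBinom ψ (n + 1) k * a k
      * b (n + 1 - k)) (n + 1)]
  have h0 : Fker ψ (n + 1 + i) (0 + j) * psiBinom ψ (n + 1) 0 * a 0 * b (n + 1 - 0)
      = Fker ψ (n + (i + 1)) (0 + j) * Fker ψ (n + 1) (0 + 0) * psiBinom ψ n 0 * a 0 *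
        b (n - 0 + 1) := by
    simp [Fker_zero ψ hψ0 hψ n, psiBinom, psiFact,
      div_self (mul_ne_zero (psiFact_ne_zero ψ hψ n) (hψ (n + 1) (Nat.le_add_left 1 n))),
      div_self (psiFact_ne_zero ψ hψ n),
      show n + (i + 1) = n + 1 + i from by ring]
  rw [h0]
  have hmain : ∑ k ∈ Finset.range (n + 1),
        Fker ψ (n + 1 + i) (k + 1 + j) * psiBinom ψ (n + 1) (k + 1) * a (k + 1) *
          b (n + 1 - (k + 1))
      = ∑ k ∈ Finset.range (n + 1),
        (Fker ψ (n + (i + 1)) (k + (j + 1)) * psiBinom ψ n k * a (k + 1) * b (n - k)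
          + Fker ψ (n + (i + 1)) (k + 1 + j) * Fker ψ (n + 1) (k + 1 + 0) * psiBinom ψ n (k + 1)
            * a (k + 1) * b (n - (k + 1) + 1)) := by
    refine Finset.sum_congr rfl fun k hk => ?_
    have hkn : k ≤ n := Nat.lt_succ_iff.mp (Finset.mem_range.mp hk)
    have eip : n + (i + 1) = n + 1 + i := by ring
    have ejp : k + (j + 1) = k + 1 + j := by ring
    rw [psi_pascal ψ hψ n k hkn, eip, ejp]
    rcases eq_or_lt_of_le hkn with rfl | hlt
    · simp only [Fker_self, Nat.succ_sub_succ, Nat.sub_self]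
      ring
    · have e1 : n + 1 - (k + 1) = n - k := by omega
      have e2 : n - (k + 1) + 1 = n - k := by omega
      simp only [e1, e2, add_zero]
      ring
  rw [hmain, Finset.sum_add_distrib]
  ring
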